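/- Let F = (p; q_1, …, q_m) be a flower in G and let S be a set consisting of three petals of F. Then S is not a cutset of G; that is, the graph G − S is connected. -/

import Mathlib

namespace Paper

variable {V : Type*}

/-- `S ⊆ V(G)` is a cutset of `G`: the graph `G − S` is disconnected. -/
def IsCutset (G : SimpleGraph V) (S : Set V) : Prop :=
  ¬ (G.induce (Sᶜ : Set V)).Connected

/-- A 3-cutset: a cutset of exactly 3 vertices. -/
def IsThreeCutset (G : SimpleGraph V) (S : Set V) : Prop :=
  S.ncard = 3 ∧ IsCutset G S

/-- `G` is triconnected: at least 4 vertices and deleting any at most 2 vertices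
leaves a connected graph. -/
def IsTriconnected [Fintype V] (G : SimpleGraph V) : Prop :=
  4 ≤ Fintype.card V ∧
    ∀ X : Set V, X.ncard ≤ 2 → (G.induce (Xᶜ : Set V)).Connected

/-- `x` and `y` both survive the deletion of `R` and lie in the same connected
component of `G − R`. -/
def ReachOutside (G : SimpleGraph V) (R : Set V) (x y : V) : Prop :=
  ∃ (hx : x ∈ (Rᶜ : Set V)) (hy : y ∈ (Rᶜ : Set V)),
    (G.induce (Rᶜ : Set V)).Reachable ⟨x, hx⟩ ⟨y, hy⟩

/-- `R` splits `X`: two vertices of `X \ R` lie in different connected components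
of `G − R`. -/
def Splits (G : SimpleGraph V) (R X : Set V) : Prop :=
  ∃ x ∈ X, ∃ y ∈ X, x ∉ R ∧ y ∉ R ∧ ¬ ReachOutside G R x y

/-- Two 3-cutsets are dependent iff one splits the other. -/
def Dependent (G : SimpleGraph V) (S T : Set V) : Prop :=
  Splits G S T ∨ Splits G T S

/-- The connected component of `G − R` containing `u` (empty if `u ∈ R`). -/
def compOutside (G : SimpleGraph V) (R : Set V) (u : V) : Set V :=
  {y | ReachOutside G R u y}

/-- `C` is a connected component of `G − R`. -/
def IsCompOutside (G : SimpleGraph V) (R : Set V) (C : Set V) : Prop :=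
  ∃ u, u ∉ R ∧ C = compOutside G R u

/-- `A` is a part of the decomposition of `G` by the set `𝔖` of cutsets: a
maximal set split by no member of `𝔖`. -/
def IsPart (G : SimpleGraph V) (𝔖 : Set (Set V)) (A : Set V) : Prop :=
  (∀ S ∈ 𝔖, ¬ Splits G S A) ∧
    ∀ B : Set V, A ⊆ B → (∀ S ∈ 𝔖, ¬ Splits G S B) → B = A

/-- The set `𝔖` of 3-cutsets generates the flower `(p; q 0, …, q (m-1))`:
every member of `𝔖` has the form `{q i, q j, p}` with `i`, `j` distinct and
non-neighboring in the cyclic order, and the decomposition of `G` by `𝔖`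
consists of exactly `m` parts `G_{i,i+1}` whose boundaries (the vertices lying
in some member of `𝔖`) are `{q i, q (i+1), p}`. -/
def GeneratesFlower (G : SimpleGraph V) (m : ℕ) (p : V) (q : ZMod m → V)
    (𝔖 : Set (Set V)) : Prop :=
  (∀ S ∈ 𝔖, IsThreeCutset G S ∧
    ∃ i j : ZMod m, j ≠ i ∧ j ≠ i + 1 ∧ i ≠ j + 1 ∧ S = {q i, q j, p}) ∧
  ∃ Gp : ZMod m → Set V, Function.Injective Gp ∧
    (∀ A : Set V, IsPart G 𝔖 A ↔ ∃ i : ZMod m, A = Gp i) ∧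
    (∀ i : ZMod m, Gp i ∩ ⋃₀ 𝔖 = {q i, q (i + 1), p})

section Aux

variable {G : SimpleGraph V} {R : Set V} {x y z : V}

lemma reach_refl (hx : x ∉ R) : ReachOutside G R x x :=
  ⟨hx, hx, SimpleGraph.Reachable.refl _⟩

lemma reach_symm (h : ReachOutside G R x y) : ReachOutside G R y x := by
  obtain ⟨hx, hy, hr⟩ := h
  exact ⟨hy, hx, hr.symm⟩

lemma reach_trans (h1 : ReachOutside G R x y) (h2 : ReachOutside G R y z) :
    ReachOutside G R x z := by
  obtain ⟨hx, hy, hr⟩ := h1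
  obtain ⟨hy', hz, hr'⟩ := h2
  exact ⟨hx, hz, hr.trans hr'⟩

lemma reach_adj (h : G.Adj x y) (hx : x ∉ R) (hy : y ∉ R) : ReachOutside G R x y :=
  ⟨hx, hy, SimpleGraph.Adj.reachable (by simpa using h)⟩

lemma reach_iff_rtg :
    ReachOutside G R x y ↔ x ∉ R ∧ y ∉ R ∧
      Relation.ReflTransGen (fun u v => G.Adj u v ∧ u ∉ R ∧ v ∉ R) x y := by
  constructor
  · rintro ⟨hx, hy, hr⟩
    refine ⟨hx, hy, ?_⟩
    rw [SimpleGraph.reachable_iff_reflTransGen] at hr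
    exact Relation.ReflTransGen.lift (Subtype.val : (Rᶜ : Set V) → V)
      (fun a b hab => ⟨by simpa using hab, a.2, b.2⟩) _ _ hr
  · rintro ⟨hx, hy, hr⟩
    clear hy
    induction hr with
    | refl => exact reach_refl hx
    | tail _ hstep ih => exact reach_trans ih (reach_adj hstep.1 hstep.2.1 hstep.2.2)

lemma unsplit_reach {A κ : Set V} (h : ¬ Splits G κ A) (hx : x ∈ A) (hy : y ∈ A)
    (hxκ : x ∉ κ) (hyκ : y ∉ κ) : ReachOutside G κ x y := by
  by_contra hc
  exact h ⟨x, hx, y, hy, hxκ, hyκ, hc⟩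

lemma exists_part_superset [Finite V] {𝔖 : Set (Set V)} {m : ℕ} {Gp : ZMod m → Set V}
    (hiff : ∀ A : Set V, IsPart G 𝔖 A ↔ ∃ t : ZMod m, A = Gp t)
    {A : Set V} (hA : ∀ κ ∈ 𝔖, ¬ Splits G κ A) : ∃ t, A ⊆ Gp t := by
  obtain ⟨M, hM, hmax⟩ := Set.Finite.exists_maximalFor id
      {B : Set V | A ⊆ B ∧ ∀ κ ∈ 𝔖, ¬ Splits G κ B} (Set.toFinite _)
      ⟨A, subset_rfl, hA⟩
  have hpart : IsPart G 𝔖 M :=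
    ⟨hM.2, fun B hMB hB => le_antisymm (hmax ⟨hM.1.trans hMB, hB⟩ hMB) hMB⟩
  obtain ⟨t, rfl⟩ := (hiff M).1 hpart
  exact ⟨t, hM.1⟩

end Aux

lemma zmod_val_sub_one {m : ℕ} [NeZero m] {c : ZMod m} (hc : c ≠ 0) :
    (c - 1).val = c.val - 1 := by
  have h1 : 1 ≤ c.val := Nat.pos_of_ne_zero (by simpa [ZMod.val_eq_zero] using hc)
  have hlt : c.val - 1 < m := by have := c.val_lt; omega
  have h2 : ((c.val - 1 : ℕ) : ZMod m) = c - 1 := by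
    rw [Nat.cast_sub h1, ZMod.natCast_zmod_val, Nat.cast_one]
  rw [← h2, ZMod.val_cast_of_lt hlt]

lemma key_case3 {m : ℕ} [NeZero m] {G : SimpleGraph V} {p : V} {q : ZMod m → V}
    {Gp : ZMod m → Set V} {𝔖 : Set (Set V)} {S H : Set V}
    (hq : Function.Injective q) (hqp : ∀ i : ZMod m, q i ≠ p)
    (hpH : p ∉ H) (hHS : ∀ v ∈ H, v ∉ S)
    (P4 : ∀ t s : ZMod m, t ≠ s → ∀ v, v ∈ Gp t → v ∈ Gp s → v ∉ ⋃₀ 𝔖 → False)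
    (P5 : ∀ u v : V, u = v ∨ G.Adj u v → ∃ t, u ∈ Gp t ∧ v ∈ Gp t)
    (P7 : ∀ (b r : ZMod m), q b ∈ Gp r → b = r ∨ b = r + 1)
    (hU : ∀ v ∈ ⋃₀ 𝔖, v = p ∨ ∃ b, v = q b)
    (hqGp : ∀ b : ZMod m, q b ∈ Gp b)
    (Hchain : ∀ v ∈ H, ∀ w ∈ H,
      Relation.ReflTransGen (fun u u' => G.Adj u u' ∧ u ∈ H ∧ u' ∈ H) v w)
    (nbr : ∀ l : ZMod m, q l ∈ S → ∃ h, h ∈ H ∧ G.Adj (q l) h)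
    {a x y w : ZMod m} (haH : q a ∈ H)
    (hxS : q x ∈ S) (hyS : q y ∈ S) (hwS : q w ∈ S) (hay : a ≠ y)
    (hdyw : (y - a).val < (w - a).val) (hdwx : (w - a).val < (x - a).val) : False := by
  -- index arithmetic
  have hdx_lt : (x - a).val < m := ZMod.val_lt _
  have hdy_pos : 0 < (y - a).val :=
    ZMod.val_pos.mpr (sub_ne_zero.mpr (Ne.symm hay))
  have hxa0 : x - a ≠ 0 := ZMod.val_pos.mp (by omega)
  have haxval : (a - x).val = m - (x - a).val := by
    have h1 : a - x = -(x - a) := by ring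
    rw [h1, ZMod.neg_val, if_neg hxa0]
  have hyxval : (y - x).val = (y - a).val + (m - (x - a).val) := by
    have h1 : y - x = (y - a) + (a - x) := by ring
    rw [h1, ZMod.val_add_of_lt (by rw [haxval]; omega), haxval]
  have hwxval : (w - x).val = (w - a).val + (m - (x - a).val) := by
    have h1 : w - x = (w - a) + (a - x) := by ring
    rw [h1, ZMod.val_add_of_lt (by rw [haxval]; omega), haxval]
  have F1 : (a - x).val < (y - x).val := by rw [haxval, hyxval]; omega
  have F2 : ¬ (w - x).val < (y - x).val := by rw [hwxval, hyxval]; omega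
  have hVypos : 0 < (y - x).val := by rw [hyxval]; omega
  have hyx0 : y - x ≠ 0 := ZMod.val_pos.mp hVypos
  have hxy : x ≠ y := fun h => hyx0 (by rw [h, sub_self])
  have hax : a ≠ x := fun h => hxa0 (by rw [h, sub_self])
  have hwx : w ≠ x := fun h => (by rw [h] at hdwx; omega : False)
  have hwy : w ≠ y := fun h => (by rw [h] at hdyw; omega : False)
  have F3a : ∀ b : ZMod m, (b - x).val < (y - x).val →
      ¬ (b - 1 - x).val < (y - x).val → b = x := by
    intro b h1 h2
    by_contra hbx
    have hb0 : b - x ≠ 0 := sub_ne_zero.mpr hbx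
    have hpos : 1 ≤ (b - x).val := Nat.pos_of_ne_zero ((ZMod.val_ne_zero _).mpr hb0)
    have hval : (b - 1 - x).val = (b - x).val - 1 := by
      have h3 : b - 1 - x = (b - x) - 1 := by ring
      rw [h3, zmod_val_sub_one hb0]
    rw [hval] at h2
    omega
  have F3b : ∀ b : ZMod m, (b - 1 - x).val < (y - x).val →
      ¬ (b - x).val < (y - x).val → b = y := by
    intro b h1 h2
    by_cases hbx : b = x
    · exfalso; apply h2; rw [hbx, sub_self, ZMod.val_zero]; exact hVypos
    · have hb0 : b - x ≠ 0 := sub_ne_zero.mpr hbx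
      have hpos : 1 ≤ (b - x).val := Nat.pos_of_ne_zero ((ZMod.val_ne_zero _).mpr hb0)
      have hval : (b - 1 - x).val = (b - x).val - 1 := by
        have h3 : b - 1 - x = (b - x) - 1 := by ring
        rw [h3, zmod_val_sub_one hb0]
      rw [hval] at h1
      have heq : (b - x).val = (y - x).val := by omega
      have : b - x = y - x := ZMod.val_injective m heq
      exact sub_left_inj.mp this
  -- the three-petal "chord" set
  set Q : Set V := {q x, q y, p} with hQdef
  -- a vertex cannot lie both in a "left" part and a "right" part
  have disj : ∀ v, v ∉ Q → ∀ t s : ZMod m, (t - x).val < (y - x).val →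
      ¬ (s - x).val < (y - x).val → v ∈ Gp t → v ∈ Gp s → False := by
    intro v hvQ t s ht hs hvt hvs
    have hts : t ≠ s := fun h => hs (h ▸ ht)
    by_cases hv𝔖 : v ∈ ⋃₀ 𝔖
    · rcases hU v hv𝔖 with rfl | ⟨b, rfl⟩
      · exact hvQ (by simp [hQdef])
      · rcases P7 b t hvt with h1 | h1 <;> rcases P7 b s hvs with h2 | h2
        · exact hts (h1.symm.trans h2)
        · have hb : b = x := by
            apply F3a b (by rw [h1]; exact ht)
            have hs' : s = b - 1 := by rw [h2]; ring
            rw [← hs']; exact hs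
          exact hvQ (by rw [hb]; simp [hQdef])
        · have hb : b = y := by
            apply F3b b
            · have ht' : t = b - 1 := by rw [h1]; ring
              rw [← ht']; exact ht
            · rw [← h2] at hs; exact hs
          exact hvQ (by rw [hb]; simp [hQdef])
        · exact hts (add_right_cancel (h1.symm.trans h2))
    · exact P4 t s hts v hvt hvs hv𝔖
  have hHQ : ∀ v ∈ H, v ∉ Q := by
    intro v hv hvQ
    have hvS := hHS v hv
    rcases hvQ with h | h | h
    · exact hvS (h ▸ hxS)
    · exact hvS (h ▸ hyS)
    · exact hpH (h ▸ hv)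
  -- every vertex of H is on the "left" side
  have Hside : ∀ v ∈ H, ∃ t : ZMod m, (t - x).val < (y - x).val ∧ v ∈ Gp t := by
    intro v hv
    have hch := Hchain (q a) haH v hv
    clear hv
    induction hch with
    | refl => exact ⟨a, F1, hqGp a⟩
    | tail _ hstep ih =>
      obtain ⟨t, ht, hbt⟩ := ih
      rename_i b c _
      obtain ⟨r, hbr, hcr⟩ := P5 b c (Or.inr hstep.1)
      by_cases hr : (r - x).val < (y - x).val
      · exact ⟨r, hr, hcr⟩
      · exact absurd (disj b (hHQ b hstep.2.1) t r ht hr hbt hbr) (fun h => h)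
  -- the third petal q w gives the contradiction
  obtain ⟨hw', hwH', hadj⟩ := nbr w hwS
  obtain ⟨t, ht, hwt⟩ := Hside hw' hwH'
  obtain ⟨r, hr1, hr2⟩ := P5 (q w) hw' (Or.inr hadj)
  have hwQ : q w ∉ Q := by
    rintro (h | h | h)
    · exact hwx (hq h)
    · exact hwy (hq h)
    · exact hqp w h
  by_cases hr : (r - x).val < (y - x).val
  · exact disj (q w) hwQ r w hr F2 hr1 (hqGp w)
  · exact disj hw' (hHQ hw' hwH') t r ht hr hwt hr2



/-- Lemma `lor12`: a set of three petals of a flower is not a cutset, i.e.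
deleting three petals leaves a connected graph. -/
theorem stmt_19 [Fintype V] (G : SimpleGraph V)
    (htri : IsTriconnected G) (hbig : 6 < Fintype.card V)
    (m : ℕ) (hm : 4 ≤ m) (p : V) (q : ZMod m → V)
    (hq : Function.Injective q) (hqp : ∀ i : ZMod m, q i ≠ p)
    (𝔖 : Set (Set V)) (h𝔖ne : 𝔖.Nonempty)
    (hgen : GeneratesFlower G m p q 𝔖)
    (i j k : ZMod m) (hij : i ≠ j) (hik : i ≠ k) (hjk : j ≠ k) :
    (G.induce (({q i, q j, q k} : Set V)ᶜ)).Connected := by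
  classical
  haveI : NeZero m := ⟨by omega⟩
  obtain ⟨hcut𝔖, Gp, hGpinj, hiff, hbd⟩ := hgen
  by_contra hcon
  set S : Set V := {q i, q j, q k} with hSdef
  -- basic membership facts
  have hiS : q i ∈ S := by simp [hSdef]
  have hjS : q j ∈ S := by simp [hSdef]
  have hkS : q k ∈ S := by simp [hSdef]
  have hpS : p ∉ S := by
    rintro (h | h | h) <;> exact hqp _ h.symm
  -- facts about 𝔖
  have hpκ : ∀ κ ∈ 𝔖, p ∈ κ := by
    intro κ hκ
    obtain ⟨-, a', b', -, -, -, rfl⟩ := hcut𝔖 κ hκ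
    simp
  have hU : ∀ v ∈ ⋃₀ 𝔖, v = p ∨ ∃ b, v = q b := by
    rintro v ⟨κ, hκ, hvκ⟩
    obtain ⟨-, a', b', -, -, -, rfl⟩ := hcut𝔖 κ hκ
    rcases hvκ with h | h | h
    · exact Or.inr ⟨a', h⟩
    · exact Or.inr ⟨b', h⟩
    · exact Or.inl h
  -- facts about parts
  have hGppart : ∀ t : ZMod m, IsPart G 𝔖 (Gp t) := fun t => (hiff _).mpr ⟨t, rfl⟩
  have hGpuns : ∀ t : ZMod m, ∀ κ ∈ 𝔖, ¬ Splits G κ (Gp t) := fun t => (hGppart t).1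
  have hGpmax : ∀ (t : ZMod m) (B : Set V), Gp t ⊆ B →
      (∀ κ ∈ 𝔖, ¬ Splits G κ B) → B = Gp t := fun t => (hGppart t).2
  have hbdmem : ∀ t : ZMod m, q t ∈ Gp t ∧ q (t + 1) ∈ Gp t ∧ p ∈ Gp t ∧
      q t ∈ ⋃₀ 𝔖 ∧ p ∈ ⋃₀ 𝔖 := by
    intro t
    have h1 : q t ∈ Gp t ∩ ⋃₀ 𝔖 := by rw [hbd t]; simp
    have h2 : q (t + 1) ∈ Gp t ∩ ⋃₀ 𝔖 := by rw [hbd t]; simp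
    have h3 : p ∈ Gp t ∩ ⋃₀ 𝔖 := by rw [hbd t]; simp
    exact ⟨h1.1, h2.1, h3.1, h1.2, h3.2⟩
  have hqGp : ∀ b : ZMod m, q b ∈ Gp b := fun b => (hbdmem b).1
  have hq𝔖 : ∀ b : ZMod m, q b ∈ ⋃₀ 𝔖 := fun b => (hbdmem b).2.2.2.1
  have P4 : ∀ t s : ZMod m, t ≠ s → ∀ v, v ∈ Gp t → v ∈ Gp s → v ∉ ⋃₀ 𝔖 → False := by
    intro t s hts v hvt hvs hv𝔖
    have hsplit : ∃ κ ∈ 𝔖, Splits G κ (Gp t ∪ Gp s) := by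
      by_contra hns
      push_neg at hns
      have h1 : Gp t ∪ Gp s = Gp t :=
        hGpmax t _ Set.subset_union_left (fun κ hκ => hns κ hκ)
      have h2 : Gp s ⊆ Gp t := h1 ▸ Set.subset_union_right
      have h3 : Gp t = Gp s := hGpmax s (Gp t) h2 (hGpuns t)
      exact hts (hGpinj h3)
    obtain ⟨κ, hκ, x', hx', y', hy', hxκ, hyκ, hnr⟩ := hsplit
    have hvκ : v ∉ κ := fun h => hv𝔖 (Set.subset_sUnion_of_mem hκ h)
    have reachv : ∀ u, u ∈ Gp t ∪ Gp s → u ∉ κ → ReachOutside G κ u v := by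
      rintro u (hu | hu) huκ
      · exact unsplit_reach (hGpuns t κ hκ) hu hvt huκ hvκ
      · exact unsplit_reach (hGpuns s κ hκ) hu hvs huκ hvκ
    exact hnr (reach_trans (reachv x' hx' hxκ) (reach_symm (reachv y' hy' hyκ)))
  have P5 : ∀ u v : V, u = v ∨ G.Adj u v → ∃ t, u ∈ Gp t ∧ v ∈ Gp t := by
    intro u v huv
    have huns : ∀ κ ∈ 𝔖, ¬ Splits G κ ({u, v} : Set V) := by
      rintro κ hκ ⟨x', hx', y', hy', hxκ, hyκ, hnr⟩
      apply hnr
      have key : ∀ z1 z2 : V, z1 ∉ κ → z2 ∉ κ → (z1 = z2 ∨ G.Adj z1 z2) →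
          ReachOutside G κ z1 z2 := by
        rintro z1 z2 h1 h2 (rfl | h)
        · exact reach_refl h1
        · exact reach_adj h h1 h2
      simp only [Set.mem_insert_iff, Set.mem_singleton_iff] at hx' hy'
      rcases hx' with rfl | rfl <;> rcases hy' with rfl | rfl
      · exact key _ _ hxκ hyκ (Or.inl rfl)
      · exact key _ _ hxκ hyκ huv
      · exact reach_symm (key _ _ hyκ hxκ huv)
      · exact key _ _ hxκ hyκ (Or.inl rfl)
    obtain ⟨t, hsub⟩ := exists_part_superset hiff huns
    exact ⟨t, hsub (by simp), hsub (by simp)⟩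
  have P7 : ∀ b r : ZMod m, q b ∈ Gp r → b = r ∨ b = r + 1 := by
    intro b r h
    have hmem : q b ∈ Gp r ∩ ⋃₀ 𝔖 := ⟨h, hq𝔖 b⟩
    rw [hbd r] at hmem
    rcases hmem with h' | h' | h'
    · exact Or.inl (hq h')
    · exact Or.inr (hq h')
    · exact absurd h' (hqp b)
  -- get a vertex z separated from p
  have hScard : S.ncard ≤ 3 := by
    have h1 := Set.ncard_insert_le (q i) ({q j, q k} : Set V)
    have h2 := Set.ncard_insert_le (q j) ({q k} : Set V)
    have h3 := Set.ncard_singleton (q k)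
    rw [hSdef]
    omega
  have hex : ∃ v : V, v ∉ S := by
    by_contra h
    push_neg at h
    have h1 : (Set.univ : Set V).ncard ≤ S.ncard :=
      Set.ncard_le_ncard (fun v _ => h v) S.toFinite
    rw [Set.ncard_univ, Nat.card_eq_fintype_card] at h1
    omega
  obtain ⟨v0, hv0⟩ := hex
  haveI hne : Nonempty (Sᶜ : Set V) := ⟨⟨v0, hv0⟩⟩
  have hnp : ¬ (G.induce (Sᶜ : Set V)).Preconnected := by
    intro h
    exact hcon ⟨h⟩
  rw [SimpleGraph.Preconnected] at hnp
  push_neg at hnp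
  obtain ⟨⟨x1, hx1⟩, ⟨x2, hx2⟩, hnr12⟩ := hnp
  have hnr12' : ¬ ReachOutside G S x1 x2 := by
    rintro ⟨h1, h2, hr⟩
    exact hnr12 hr
  have hzex : ∃ z, z ∉ S ∧ ¬ ReachOutside G S z p := by
    by_cases h1 : ReachOutside G S x1 p
    · exact ⟨x2, hx2, fun h2 => hnr12' (reach_trans h1 (reach_symm h2))⟩
    · exact ⟨x1, hx1, h1⟩
  obtain ⟨z, hzS, hzp⟩ := hzex
  set H : Set V := {v | v ∉ S ∧ ReachOutside G S z v} with hHdef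
  have hzH : z ∈ H := ⟨hzS, reach_refl hzS⟩
  have hpH : p ∉ H := fun h => hzp h.2
  have hHS : ∀ v ∈ H, v ∉ S := fun v hv => hv.1
  have hHext : ∀ u c : V, u ∈ H → G.Adj u c → c ∉ S → c ∈ H :=
    fun u c hu hadj hc => ⟨hc, reach_trans hu.2 (reach_adj hadj hu.1 hc)⟩
  have Hchain : ∀ v ∈ H, ∀ w ∈ H,
      Relation.ReflTransGen (fun u u' => G.Adj u u' ∧ u ∈ H ∧ u' ∈ H) v w := by
    intro v hv w hw
    have hr : ReachOutside G S v w := reach_trans (reach_symm hv.2) hw.2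
    rw [reach_iff_rtg] at hr
    obtain ⟨hv', hw', hrtg⟩ := hr
    have main : ∀ c, Relation.ReflTransGen (fun u u' => G.Adj u u' ∧ u ∉ S ∧ u' ∉ S) v c →
        Relation.ReflTransGen (fun u u' => G.Adj u u' ∧ u ∈ H ∧ u' ∈ H) v c ∧ c ∈ H := by
      intro c hc
      induction hc with
      | refl => exact ⟨Relation.ReflTransGen.refl, hv⟩
      | tail _ hstep ih =>
        have hcH := hHext _ _ ih.2 hstep.1 hstep.2.2
        exact ⟨ih.1.tail ⟨hstep.1, ih.2, hcH⟩, hcH⟩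
    exact (main w hrtg).1
  -- every petal in S has a neighbour in H
  have nbr : ∀ l : ZMod m, q l ∈ S → ∃ h, h ∈ H ∧ G.Adj (q l) h := by
    intro l hl
    by_contra hno
    push_neg at hno
    have hcard2 : (S \ {q l}).ncard ≤ 2 := by
      have := Set.ncard_diff_singleton_lt_of_mem hl S.toFinite
      omega
    have hconn := htri.2 (S \ {q l}) hcard2
    have hz' : z ∈ ((S \ {q l})ᶜ : Set V) := fun h => hzS h.1
    have hp' : p ∈ ((S \ {q l})ᶜ : Set V) := fun h => hpS h.1
    have hreach : ReachOutside G (S \ {q l}) z p :=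
      ⟨hz', hp', hconn.preconnected _ _⟩
    rw [reach_iff_rtg] at hreach
    obtain ⟨-, -, hrtg⟩ := hreach
    have main : ∀ c, Relation.ReflTransGen
        (fun u u' => G.Adj u u' ∧ u ∉ S \ {q l} ∧ u' ∉ S \ {q l}) z c → c ∈ H := by
      intro c hc
      induction hc with
      | refl => exact hzH
      | tail _ hstep ih =>
        rename_i b c' _
        by_cases hcl : c' = q l
        · exact absurd (by rw [hcl] at hstep; exact hstep.1.symm) (hno b ih)
        · have hcS : c' ∉ S := by
            intro hcS
            exact hstep.2.2 ⟨hcS, fun hh => hcl hh⟩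
          exact hHext _ _ ih hstep.1 hcS
    exact hpH (main p hrtg)
  -- case split on whether H contains a petal
  by_cases hpet : ∃ b : ZMod m, q b ∈ H
  · -- petal case
    obtain ⟨a, haH⟩ := hpet
    have haS : q a ∉ S := hHS _ haH
    have hvals : ∀ s1 s2 : ZMod m, (s1 - a).val = (s2 - a).val → s1 = s2 := by
      intro s1 s2 h
      have h2 : s1 - a = s2 - a := ZMod.val_injective m h
      exact sub_left_inj.mp h2
    have hai : a ≠ i := fun h => haS (h ▸ hiS)
    have haj : a ≠ j := fun h => haS (h ▸ hjS)
    have hak : a ≠ k := fun h => haS (h ▸ hkS)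
    have KEY : ∀ x y w : ZMod m, q x ∈ S → q y ∈ S → q w ∈ S → a ≠ y →
        (y - a).val < (w - a).val → (w - a).val < (x - a).val → False :=
      fun x y w hxS hyS hwS hay hd1 hd2 =>
        key_case3 hq hqp hpH hHS P4 P5 P7 hU hqGp Hchain nbr haH hxS hyS hwS hay hd1 hd2
    have hdij : (i - a).val ≠ (j - a).val := fun h => hij (hvals _ _ h)
    have hdik : (i - a).val ≠ (k - a).val := fun h => hik (hvals _ _ h)
    have hdjk : (j - a).val ≠ (k - a).val := fun h => hjk (hvals _ _ h)
    rcases lt_trichotomy ((i - a).val) ((j - a).val) with h1 | h1 | h1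
    · rcases lt_trichotomy ((k - a).val) ((i - a).val) with h2 | h2 | h2
      · exact KEY j k i hjS hkS hiS hak h2 h1
      · exact absurd h2.symm hdik
      · rcases lt_trichotomy ((k - a).val) ((j - a).val) with h3 | h3 | h3
        · exact KEY j i k hjS hiS hkS hai h2 h3
        · exact absurd h3 hdjk.symm
        · exact KEY k i j hkS hiS hjS hai h1 h3
    · exact absurd h1 hdij
    · rcases lt_trichotomy ((k - a).val) ((j - a).val) with h2 | h2 | h2
      · exact KEY i k j hiS hkS hjS hak h2 h1
      · exact absurd h2.symm hdjk
      · rcases lt_trichotomy ((k - a).val) ((i - a).val) with h3 | h3 | h3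
        · exact KEY i j k hiS hjS hkS haj h2 h3
        · exact absurd h3 hdik.symm
        · exact KEY k j i hkS hjS hiS haj h1 h3
  · -- no-petal case
    push_neg at hpet
    have hH𝔖 : ∀ v ∈ H, v ∉ ⋃₀ 𝔖 := by
      intro v hv hv𝔖
      rcases hU v hv𝔖 with rfl | ⟨b, rfl⟩
      · exact hpH hv
      · exact hpet b hv
    have huns : ∀ κ ∈ 𝔖, ¬ Splits G κ (H ∪ {p}) := by
      rintro κ hκ ⟨x', hx', y', hy', hxκ, hyκ, hnr⟩
      have hpκ' : p ∈ κ := hpκ κ hκ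
      have hx'H : x' ∈ H := by
        rcases hx' with h | h
        · exact h
        · exact absurd (h ▸ hpκ') hxκ
      have hy'H : y' ∈ H := by
        rcases hy' with h | h
        · exact h
        · exact absurd (h ▸ hpκ') hyκ
      apply hnr
      have hdisj : ∀ v ∈ H, v ∉ κ :=
        fun v hv hvκ => hH𝔖 v hv (Set.subset_sUnion_of_mem hκ hvκ)
      have hch := Hchain x' hx'H y' hy'H
      rw [reach_iff_rtg]
      exact ⟨hxκ, hyκ, Relation.ReflTransGen.mono
        (fun a b hab => ⟨hab.1, hdisj a hab.2.1, hdisj b hab.2.2⟩) _ _ hch⟩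
    obtain ⟨t, hsub⟩ := exists_part_superset hiff huns
    have hql : ∀ l : ZMod m, q l ∈ S → q l ∈ Gp t := by
      intro l hl
      obtain ⟨hl', hlH, hladj⟩ := nbr l hl
      have hl'Gp : hl' ∈ Gp t := hsub (Or.inl hlH)
      have hl'κ : ∀ κ ∈ 𝔖, hl' ∉ κ :=
        fun κ hκ h => hH𝔖 _ hlH (Set.subset_sUnion_of_mem hκ h)
      have huns2 : ∀ κ ∈ 𝔖, ¬ Splits G κ (Gp t ∪ {q l}) := by
        rintro κ hκ ⟨x', hx', y', hy', hxκ, hyκ, hnr⟩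
        apply hnr
        have key : ∀ u, u ∈ Gp t ∪ {q l} → u ∉ κ → ReachOutside G κ u hl' := by
          rintro u (hu | hu) huκ
          · exact unsplit_reach (hGpuns t κ hκ) hu hl'Gp huκ (hl'κ κ hκ)
          · rw [Set.mem_singleton_iff] at hu
            rw [hu]
            exact reach_adj hladj (hu ▸ huκ) (hl'κ κ hκ)
        exact reach_trans (key x' hx' hxκ) (reach_symm (key y' hy' hyκ))
      have heq := hGpmax t _ Set.subset_union_left huns2
      rw [← heq]
      exact Or.inr rfl
    have hi' := P7 i t (hql i hiS)
    have hj' := P7 j t (hql j hjS)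
    have hk' := P7 k t (hql k hkS)
    rcases hi' with h1 | h1 <;> rcases hj' with h2 | h2 <;> rcases hk' with h3 | h3 <;>
      first
        | exact hij (h1.trans h2.symm)
        | exact hik (h1.trans h3.symm)
        | exact hjk (h2.trans h3.symm)


end Paper
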